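/- arXiv:1709.02407 — 6 statements merged into one kernel-verified Lean document; each statement's English description precedes it below -/
import Mathlib

section
/- For every real t, the time-evolution operator admits the spectral decomposition U_qs(t) = Σ_{k ∈ {0,1,2,4,6,7}} e_k e_k† + (e^{−it}/2)·(e₃ + e₅)(e₃ + e₅)† + (e^{it}/2)·(e₃ − e₅)(e₃ − e₅)†, where e_k denotes the k-th standard basis column vector of ℂ⁸. -/
open Matrix Complex

/-- The Hamiltonian of the quantum qubit switch: the 8×8 complex matrix whose only
nonzero entries are `(H_qs)_{3,5} = (H_qs)_{5,3} = 1`. -/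
noncomputable def Hqs : Matrix (Fin 8) (Fin 8) ℂ :=
  Matrix.of fun i j =>
    if (i = 3 ∧ j = 5) ∨ (i = 5 ∧ j = 3) then 1 else 0

/-- The time-evolution operator `U_qs(t) = exp(−i t H_qs)` (matrix exponential). -/
noncomputable def Uqs (t : ℝ) : Matrix (Fin 8) (Fin 8) ℂ :=
  NormedSpace.exp ((-(Complex.I * (t : ℂ))) • Hqs)

/-- The k-th standard basis column vector of ℂ⁸. -/
noncomputable def e (k : Fin 8) : Fin 8 → ℂ := Pi.single k 1

noncomputable def Vqs : Matrix (Fin 8) (Fin 8) ℂ :=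
  Matrix.of fun i j =>
    if i = 3 ∧ j = 3 then 1 else if i = 3 ∧ j = 5 then 1
    else if i = 5 ∧ j = 3 then 1 else if i = 5 ∧ j = 5 then -1
    else if i = j then 1 else 0

noncomputable def Vqsinv : Matrix (Fin 8) (Fin 8) ℂ :=
  Matrix.of fun i j =>
    if i = 3 ∧ j = 3 then 1/2 else if i = 3 ∧ j = 5 then 1/2
    else if i = 5 ∧ j = 3 then 1/2 else if i = 5 ∧ j = 5 then -(1/2)
    else if i = j then 1 else 0

lemma Vqs_mul_inv : Vqs * Vqsinv = 1 := by
  ext i j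
  fin_cases i <;> fin_cases j <;>
    simp [Vqs, Vqsinv, Matrix.mul_apply, Fin.sum_univ_eight, Matrix.one_apply] <;> norm_num

lemma Vqsinv_mul : Vqsinv * Vqs = 1 := by
  ext i j
  fin_cases i <;> fin_cases j <;>
    simp [Vqs, Vqsinv, Matrix.mul_apply, Fin.sum_univ_eight, Matrix.one_apply] <;> norm_num

noncomputable def dqs (t : ℝ) : Fin 8 → ℂ :=
  fun j => if j = 3 then -(Complex.I * (t : ℂ)) else if j = 5 then Complex.I * (t : ℂ) else 0

noncomputable def Vunit : (Matrix (Fin 8) (Fin 8) ℂ)ˣ :=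
  ⟨Vqs, Vqsinv, Vqs_mul_inv, Vqsinv_mul⟩

lemma conj_eq (t : ℝ) :
    (Vunit : Matrix (Fin 8) (Fin 8) ℂ) * Matrix.diagonal (dqs t) * (↑Vunit⁻¹ : Matrix (Fin 8) (Fin 8) ℂ)
      = (-(Complex.I * (t : ℂ))) • Hqs := by
  show Vqs * Matrix.diagonal (dqs t) * Vqsinv = _
  ext i j
  fin_cases i <;> fin_cases j <;>
    simp [Vqs, Vqsinv, Hqs, dqs, Matrix.mul_apply, Fin.sum_univ_eight, Matrix.diagonal] <;>
    ring

/-- the common explicit form -/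
noncomputable def Mqs (t : ℝ) : Matrix (Fin 8) (Fin 8) ℂ :=
  Matrix.of fun i j =>
    if i = 3 ∧ j = 3 then (Complex.exp (-(Complex.I * t)) + Complex.exp (Complex.I * t)) / 2
    else if i = 3 ∧ j = 5 then (Complex.exp (-(Complex.I * t)) - Complex.exp (Complex.I * t)) / 2
    else if i = 5 ∧ j = 3 then (Complex.exp (-(Complex.I * t)) - Complex.exp (Complex.I * t)) / 2
    else if i = 5 ∧ j = 5 then (Complex.exp (-(Complex.I * t)) + Complex.exp (Complex.I * t)) / 2
    else if i = j then 1 else 0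

lemma lhs_eq (t : ℝ) :
    Vqs * Matrix.diagonal (fun j => Complex.exp (dqs t j)) * Vqsinv = Mqs t := by
  ext i j
  fin_cases i <;> fin_cases j <;>
    simp [Vqs, Vqsinv, Mqs, dqs, Matrix.mul_apply, Fin.sum_univ_eight, Matrix.diagonal] <;>
    ring

set_option maxHeartbeats 1600000 in
lemma rhs_eq (t : ℝ) :
    (∑ k ∈ ({0, 1, 2, 4, 6, 7} : Finset (Fin 8)), vecMulVec (e k) (star (e k)))
      + (Complex.exp (-(Complex.I * (t : ℂ))) / 2) •
          vecMulVec (e 3 + e 5) (star (e 3 + e 5))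
      + (Complex.exp (Complex.I * (t : ℂ)) / 2) •
          vecMulVec (e 3 - e 5) (star (e 3 - e 5)) = Mqs t := by
  have hsum : (∑ k ∈ ({0, 1, 2, 4, 6, 7} : Finset (Fin 8)), vecMulVec (e k) (star (e k)))
      = vecMulVec (e 0) (star (e 0)) + (vecMulVec (e 1) (star (e 1)) + (vecMulVec (e 2) (star (e 2))
      + (vecMulVec (e 4) (star (e 4)) + (vecMulVec (e 6) (star (e 6)) + vecMulVec (e 7) (star (e 7)))))) := by
    rw [Finset.sum_insert (by decide), Finset.sum_insert (by decide), Finset.sum_insert (by decide),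
      Finset.sum_insert (by decide), Finset.sum_insert (by decide), Finset.sum_singleton]
  rw [hsum]
  ext i j
  simp only [Matrix.add_apply, Matrix.smul_apply,
    vecMulVec_apply, Pi.add_apply, Pi.sub_apply, Pi.star_apply, e, Pi.single_apply,
    smul_eq_mul, Mqs, Matrix.of_apply, apply_ite (star : ℂ → ℂ), star_one, star_zero]
  fin_cases i <;> fin_cases j <;> simp <;> ring

/-- Spectral decomposition of the switch evolution operator:
`U_qs(t) = Σ_{k ∈ {0,1,2,4,6,7}} e_k e_k† + (e^{−it}/2)(e₃+e₅)(e₃+e₅)†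
          + (e^{it}/2)(e₃−e₅)(e₃−e₅)†`. -/
theorem switch_spectral_decomposition (t : ℝ) :
    Uqs t =
      (∑ k ∈ ({0, 1, 2, 4, 6, 7} : Finset (Fin 8)), vecMulVec (e k) (star (e k)))
      + (Complex.exp (-(Complex.I * (t : ℂ))) / 2) •
          vecMulVec (e 3 + e 5) (star (e 3 + e 5))
      + (Complex.exp (Complex.I * (t : ℂ)) / 2) •
          vecMulVec (e 3 - e 5) (star (e 3 - e 5)) := by
  rw [rhs_eq, ← lhs_eq t, Uqs, ← conj_eq t, Matrix.exp_units_conj, Matrix.exp_diagonal]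
  congr 2
  rw [Pi.exp_def]
  funext j
  rw [Complex.exp_eq_exp_ℂ]
end

section
/- Let A = (α₀, β₀) and B = (α₁, β₁) be vectors in ℂ². For every real t, the vector U_qs(t) · (A ⊗ B ⊗ (0,1)) ∈ ℂ⁸ has components: entry 1 equals α₀α₁, entry 3 equals cos(t)·α₀β₁ − i·sin(t)·α₁β₀, entry 5 equals cos(t)·α₁β₀ − i·sin(t)·α₀β₁, entry 7 equals β₀β₁, and all other entries are 0. -/
open Matrix Complex

set_option maxHeartbeats 1000000

def tensor3 (A B C : Fin 2 → ℂ) : Fin 8 → ℂ := fun i =>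
  A ⟨i.val / 4, by omega⟩ * B ⟨i.val / 2 % 2, by omega⟩ * C ⟨i.val % 2, by omega⟩

/-- Change-of-basis matrix (unnormalized): identity except block [[1,1],[1,-1]] on {3,5}. -/
def Pmat : Matrix (Fin 8) (Fin 8) ℂ :=
  Matrix.of fun i j =>
    if (i = 3 ∧ j = 3) ∨ (i = 3 ∧ j = 5) ∨ (i = 5 ∧ j = 3) then 1
    else if i = 5 ∧ j = 5 then -1
    else if i = j then 1 else 0

/-- Inverse of `Pmat`: identity except block [[1/2,1/2],[1/2,-1/2]] on {3,5}. -/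
noncomputable def Pinv : Matrix (Fin 8) (Fin 8) ℂ :=
  Matrix.of fun i j =>
    if (i = 3 ∧ j = 3) ∨ (i = 3 ∧ j = 5) ∨ (i = 5 ∧ j = 3) then (2 : ℂ)⁻¹
    else if i = 5 ∧ j = 5 then -(2 : ℂ)⁻¹
    else if i = j then 1 else 0

lemma Pmat_mul_Pinv : Pmat * Pinv = 1 := by
  ext i j
  fin_cases i <;> fin_cases j <;>
    simp [Pmat, Pinv, Matrix.mul_apply, Fin.sum_univ_eight, Matrix.one_apply] <;> norm_num

lemma Pinv_mul_Pmat : Pinv * Pmat = 1 := by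
  ext i j
  fin_cases i <;> fin_cases j <;>
    simp [Pmat, Pinv, Matrix.mul_apply, Fin.sum_univ_eight, Matrix.one_apply] <;> norm_num

def dvec (t : ℝ) : Fin 8 → ℂ := fun i =>
  if i = 3 then -(Complex.I * (t : ℂ)) else if i = 5 then Complex.I * (t : ℂ) else 0

lemma conj_eq_s5 (t : ℝ) :
    (-(Complex.I * (t : ℂ))) • Hqs = Pmat * Matrix.diagonal (dvec t) * Pinv := by
  ext i j
  fin_cases i <;> fin_cases j <;>
    simp [Pmat, Pinv, Hqs, dvec, Matrix.mul_apply, Matrix.mul_diagonal,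
      Fin.sum_univ_eight] <;> ring

noncomputable def Punit : (Matrix (Fin 8) (Fin 8) ℂ)ˣ :=
  ⟨Pmat, Pinv, Pmat_mul_Pinv, Pinv_mul_Pmat⟩

lemma Uqs_eq (t : ℝ) :
    Uqs t = Pmat * Matrix.diagonal (fun i => Complex.exp (dvec t i)) * Pinv := by
  rw [Uqs, conj_eq_s5]
  have h := Matrix.exp_units_conj Punit (Matrix.diagonal (dvec t))
  have hu : (Punit : Matrix (Fin 8) (Fin 8) ℂ) = Pmat := rfl
  have hui : ((Punit⁻¹ : (Matrix (Fin 8) (Fin 8) ℂ)ˣ) : Matrix (Fin 8) (Fin 8) ℂ) = Pinv := rfl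
  rw [hu, hui] at h
  rw [h, Matrix.exp_diagonal]
  congr 2
  rw [Matrix.diagonal_eq_diagonal_iff]
  intro i
  rw [Complex.exp_eq_exp_ℂ, Pi.exp_def]


lemma vec8_five {α : Type*} (a b c d e f g h : α) : ![a,b,c,d,e,f,g,h] (5 : Fin 8) = f := rfl
lemma vec8_six {α : Type*} (a b c d e f g h : α) : ![a,b,c,d,e,f,g,h] (6 : Fin 8) = g := rfl
lemma vec8_seven {α : Type*} (a b c d e f g h : α) : ![a,b,c,d,e,f,g,h] (7 : Fin 8) = h := rfl

lemma tensor3_eq (α₀ β₀ α₁ β₁ : ℂ) :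
    tensor3 ![α₀, β₀] ![α₁, β₁] ![0, 1] =
      ![0, α₀ * α₁, 0, α₀ * β₁, 0, β₀ * α₁, 0, β₀ * β₁] := by
  funext i
  fin_cases i <;> simp [tensor3, vec8_five, vec8_six, vec8_seven]

/-- With the control (third) qubit in state |1⟩, the action of the switch at time t
on the product state `A ⊗ B ⊗ |1⟩` produces the explicitly given vector. -/
theorem switch_control_one (α₀ β₀ α₁ β₁ : ℂ) (t : ℝ) :
    (Uqs t).mulVec (tensor3 ![α₀, β₀] ![α₁, β₁] ![0, 1]) =
      ![0,
        α₀ * α₁,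
        0,
        (Real.cos t : ℂ) * (α₀ * β₁) - Complex.I * (Real.sin t : ℂ) * (α₁ * β₀),
        0,
        (Real.cos t : ℂ) * (α₁ * β₀) - Complex.I * (Real.sin t : ℂ) * (α₀ * β₁),
        0,
        β₀ * β₁] := by
  rw [Uqs_eq, tensor3_eq]
  have he1 : Complex.exp (-(Complex.I * (t : ℂ))) =
      Complex.cos t - Complex.sin t * Complex.I := by
    rw [show -(Complex.I * (t:ℂ)) = (-(t:ℂ)) * Complex.I by ring, Complex.exp_mul_I,
      Complex.cos_neg, Complex.sin_neg]
    ring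
  have he2 : Complex.exp (Complex.I * (t : ℂ)) =
      Complex.cos t + Complex.sin t * Complex.I := by
    rw [show (Complex.I * (t:ℂ)) = (t:ℂ) * Complex.I by ring, Complex.exp_mul_I]
  funext i
  fin_cases i <;>
    simp [Matrix.mulVec, dotProduct, Matrix.mul_apply, Matrix.mul_diagonal,
      Fin.sum_univ_eight, Pmat, Pinv, dvec, he1, he2, vec8_five, vec8_six, vec8_seven,
      ← Complex.ofReal_cos, ← Complex.ofReal_sin] <;> ring
end

section
/- Let α₀, β₀ ∈ ℂ with |α₀|² + |β₀|² = 1, t ∈ ℝ, and let M(t) be the 2×2 complex matrix [[α₀, −i·sin(t)·β₀], [cos(t)·β₀, 0]]. Then the characteristic polynomial of M(t)·M(t)† equals X² − X + |β₀|⁴·sin²(2t)/4; consequently the eigenvalues of M(t)M(t)† are (1 ± √(1 − |β₀|⁴ sin²(2t)))/2, and the singular values of M(t) (the Schmidt coefficients of the corresponding two-qubit state) are √((1 ± √(1 − |β₀|⁴ sin²(2t)))/2). -/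
open Matrix Polynomial Complex

/-- Coefficient matrix of the switch two-qubit state ψ(t):
`M(t) = [[α₀, −i sin(t) β₀], [cos(t) β₀, 0]]`. -/
noncomputable def Mcoef (α₀ β₀ : ℂ) (t : ℝ) : Matrix (Fin 2) (Fin 2) ℂ :=
  !![α₀, -Complex.I * (Real.sin t : ℂ) * β₀; (Real.cos t : ℂ) * β₀, 0]

lemma charpoly_fin_two_aux (A : Matrix (Fin 2) (Fin 2) ℂ) :
    A.charpoly = X ^ 2 - C A.trace * X + C A.det := by
  rw [Matrix.charpoly, Matrix.det_fin_two, Matrix.charmatrix_apply_eq,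
    Matrix.charmatrix_apply_eq, Matrix.charmatrix_apply_ne _ _ _ (by decide),
    Matrix.charmatrix_apply_ne _ _ _ (by decide), Matrix.trace_fin_two, Matrix.det_fin_two]
  simp only [map_add, map_sub, _root_.map_mul]
  ring

lemma trace_aux (α₀ β₀ : ℂ) (t : ℝ)
    (hnorm : ‖α₀‖ ^ 2 + ‖β₀‖ ^ 2 = 1) :
    (Mcoef α₀ β₀ t * (Mcoef α₀ β₀ t)ᴴ).trace = 1 := by
  have hH : (Mcoef α₀ β₀ t)ᴴ =
      !![(starRingEnd ℂ) α₀, (Real.cos t : ℂ) * (starRingEnd ℂ) β₀;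
         Complex.I * (Real.sin t : ℂ) * (starRingEnd ℂ) β₀, 0] := by
    ext i j
    fin_cases i <;> fin_cases j <;>
      simp [Mcoef, Matrix.conjTranspose_apply, Complex.star_def, ← Complex.ofReal_sin,
        ← Complex.ofReal_cos, Complex.conj_ofReal]
  rw [hH, Mcoef, Matrix.mul_fin_two, Matrix.trace_fin_two]
  simp only [Matrix.of_apply, Matrix.cons_val_zero, Matrix.cons_val_one, Matrix.head_cons,
    Matrix.cons_val', Matrix.empty_val', Matrix.cons_val_fin_one, Matrix.head_fin_const]
  have ha : α₀ * (starRingEnd ℂ) α₀ = ((‖α₀‖ : ℂ))^2 := by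
    rw [Complex.mul_conj]; norm_cast; exact (Complex.sq_norm _).symm
  have hb : β₀ * (starRingEnd ℂ) β₀ = ((‖β₀‖ : ℂ))^2 := by
    rw [Complex.mul_conj]; norm_cast; exact (Complex.sq_norm _).symm
  have hc : ((‖α₀‖ :ℂ)) ^ 2 + ((‖β₀‖:ℂ)) ^ 2 = 1 := by
    exact_mod_cast hnorm
  have hs : ((Real.sin t:ℂ))^2 + ((Real.cos t:ℂ))^2 = 1 := by
    exact_mod_cast Real.sin_sq_add_cos_sq t
  have hI := Complex.I_mul_I
  linear_combination ha + (((Real.sin t:ℂ))^2 + ((Real.cos t:ℂ))^2) * hb + hc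
    + ((‖β₀‖:ℂ))^2 * hs - (Real.sin t:ℂ)^2 * β₀ * (starRingEnd ℂ) β₀ * hI

lemma det_aux (α₀ β₀ : ℂ) (t : ℝ) :
    (Mcoef α₀ β₀ t * (Mcoef α₀ β₀ t)ᴴ).det
      = ((‖β₀‖ ^ 4 * Real.sin (2 * t) ^ 2 / 4 : ℝ) : ℂ) := by
  have hdet : (Mcoef α₀ β₀ t).det
      = Complex.I * (Real.sin t : ℂ) * (Real.cos t : ℂ) * β₀ ^ 2 := by
    simp [Mcoef, Matrix.det_fin_two_of]
    ring
  rw [Matrix.det_mul, Matrix.det_conjTranspose, hdet, Complex.star_def, Complex.mul_conj]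
  norm_cast
  have : Complex.normSq (Complex.I * (Real.sin t : ℂ) * (Real.cos t : ℂ) * β₀ ^ 2)
      = Real.sin t ^ 2 * Real.cos t ^ 2 * ‖β₀‖ ^ 4 := by
    simp only [Complex.normSq_mul, Complex.normSq_I, Complex.normSq_ofReal, map_pow]
    have : Complex.normSq β₀ = ‖β₀‖ ^ 2 := (Complex.sq_norm β₀).symm
    rw [this]; ring
  rw [this, Real.sin_two_mul]
  ring

/-- The characteristic polynomial of M(t)M(t)† is X² − X + |β₀|⁴ sin²(2t)/4; hence the
eigenvalues of M(t)M(t)† are (1 + √(1 − |β₀|⁴ sin²(2t)))/2 and the singular values of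
M(t) (the Schmidt coefficients) are √((1 + √(1 − |β₀|⁴ sin²(2t)))/2). -/
theorem schmidt_coefficients_of_switch_state (α₀ β₀ : ℂ) (t : ℝ)
    (hnorm : ‖α₀‖ ^ 2 + ‖β₀‖ ^ 2 = 1) :
    (Mcoef α₀ β₀ t * (Mcoef α₀ β₀ t)ᴴ).charpoly =
        X ^ 2 - X + C ((‖β₀‖ ^ 4 * Real.sin (2 * t) ^ 2 / 4 : ℝ) : ℂ) ∧
    ((Mcoef α₀ β₀ t * (Mcoef α₀ β₀ t)ᴴ).charpoly.eval
        ((((1 + Real.sqrt (1 - ‖β₀‖ ^ 4 * Real.sin (2 * t) ^ 2)) / 2 : ℝ)) : ℂ)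
      = 0) ∧
    ((Mcoef α₀ β₀ t * (Mcoef α₀ β₀ t)ᴴ).charpoly.eval
        ((((1 - Real.sqrt (1 - ‖β₀‖ ^ 4 * Real.sin (2 * t) ^ 2)) / 2 : ℝ)) : ℂ)
      = 0) ∧
    ((Mcoef α₀ β₀ t * (Mcoef α₀ β₀ t)ᴴ).charpoly.eval
        (((Real.sqrt ((1 + Real.sqrt (1 - ‖β₀‖ ^ 4 * Real.sin (2 * t) ^ 2)) / 2)
            ^ 2 : ℝ)) : ℂ) = 0) ∧
    ((Mcoef α₀ β₀ t * (Mcoef α₀ β₀ t)ᴴ).charpoly.eval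
        (((Real.sqrt ((1 - Real.sqrt (1 - ‖β₀‖ ^ 4 * Real.sin (2 * t) ^ 2)) / 2)
            ^ 2 : ℝ)) : ℂ) = 0) := by
  set s : ℝ := ‖β₀‖ ^ 4 * Real.sin (2 * t) ^ 2 with hs_def
  have hb1 : ‖β₀‖ ^ 2 ≤ 1 := by nlinarith [norm_nonneg α₀, sq_nonneg (‖α₀‖)]
  have hsin : Real.sin (2 * t) ^ 2 ≤ 1 := Real.sin_sq_le_one (2 * t)
  have hs0 : 0 ≤ s := by positivity
  have hs1 : s ≤ 1 := by
    have h4 : ‖β₀‖ ^ 4 ≤ 1 := by nlinarith [norm_nonneg β₀]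
    nlinarith [sq_nonneg (Real.sin (2 * t)), norm_nonneg β₀]
  have hrs : 0 ≤ 1 - s := by linarith
  have hsq : Real.sqrt (1 - s) ^ 2 = 1 - s := Real.sq_sqrt hrs
  have hsqle : Real.sqrt (1 - s) ≤ 1 := Real.sqrt_le_one.mpr (by linarith)
  -- the characteristic polynomial
  have hcp : (Mcoef α₀ β₀ t * (Mcoef α₀ β₀ t)ᴴ).charpoly =
      X ^ 2 - X + C (((s / 4 : ℝ)) : ℂ) := by
    rw [charpoly_fin_two_aux, trace_aux α₀ β₀ t hnorm, det_aux α₀ β₀ t]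
    rw [show ((‖β₀‖ ^ 4 * Real.sin (2 * t) ^ 2 / 4 : ℝ) : ℂ) = (((s / 4 : ℝ)) : ℂ) by
      rw [hs_def]]
    simp
  -- a real root criterion
  have key : ∀ r : ℝ, (2 * r - 1) ^ 2 = 1 - s →
      (Mcoef α₀ β₀ t * (Mcoef α₀ β₀ t)ᴴ).charpoly.eval ((r : ℝ) : ℂ) = 0 := by
    intro r hr
    rw [hcp]
    simp only [eval_add, eval_sub, eval_pow, eval_X, eval_C]
    have hreal : r ^ 2 - r + s / 4 = 0 := by nlinarith [hr]
    calc ((r:ℝ):ℂ) ^ 2 - ((r:ℝ):ℂ) + (((s/4 : ℝ)):ℂ)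
        = ((r ^ 2 - r + s / 4 : ℝ) : ℂ) := by push_cast; ring
      _ = 0 := by rw [hreal]; simp
  have h1 : (2 * ((1 + Real.sqrt (1 - s)) / 2) - 1) ^ 2 = 1 - s := by
    rw [show 2 * ((1 + Real.sqrt (1 - s)) / 2) - 1 = Real.sqrt (1 - s) by ring]
    exact hsq
  have h2 : (2 * ((1 - Real.sqrt (1 - s)) / 2) - 1) ^ 2 = 1 - s := by
    rw [show 2 * ((1 - Real.sqrt (1 - s)) / 2) - 1 = -Real.sqrt (1 - s) by ring, neg_sq]
    exact hsq
  have e1 : Real.sqrt ((1 + Real.sqrt (1 - s)) / 2) ^ 2 = (1 + Real.sqrt (1 - s)) / 2 :=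
    Real.sq_sqrt (by positivity)
  have e2 : Real.sqrt ((1 - Real.sqrt (1 - s)) / 2) ^ 2 = (1 - Real.sqrt (1 - s)) / 2 :=
    Real.sq_sqrt (by linarith)
  refine ⟨hcp, key _ h1, key _ h2, ?_, ?_⟩
  · rw [e1]; exact key _ h1
  · rw [e2]; exact key _ h2
end

section
/- Let α₀, β₀ ∈ ℂ with |α₀|² + |β₀|² = 1, t ∈ ℝ, ρ(t) = ψ(t)ψ(t)†, and let ρ^{T_B}(t) be the partial transpose of ρ(t) on the second qubit, i.e. the 4×4 matrix with (ρ^{T_B})_{2i+k, 2j+l} = ρ_{2i+l, 2j+k} for i,j,k,l ∈ {0,1}. Then the characteristic polynomial of ρ^{T_B}(t) equals (X² − X + |β₀|⁴ sin²(2t)/4)·(X² − |β₀|⁴ sin²(2t)/4); hence the eigenvalues of ρ^{T_B}(t) are ±|β₀|²·sin(t)·cos(t) together with (1 ± √(1 − |β₀|⁴ sin²(2t)))/2. -/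
open Matrix Polynomial Complex

/-- The two-qubit state of the switch at time t:
ψ(t) = (α₀, −i sin(t) β₀, cos(t) β₀, 0). -/
noncomputable def ψ (α₀ β₀ : ℂ) (t : ℝ) : Fin 4 → ℂ :=
  ![α₀, -Complex.I * (Real.sin t : ℂ) * β₀, (Real.cos t : ℂ) * β₀, 0]

/-- The density matrix ρ(t) = ψ(t)ψ(t)†. -/
noncomputable def ρ (α₀ β₀ : ℂ) (t : ℝ) : Matrix (Fin 4) (Fin 4) ℂ :=
  vecMulVec (ψ α₀ β₀ t) (star (ψ α₀ β₀ t))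

/-- Partial transpose on the second qubit:
`(ρ^{T_B})_{2i+k, 2j+l} = ρ_{2i+l, 2j+k}`. -/
noncomputable def ρTB (α₀ β₀ : ℂ) (t : ℝ) : Matrix (Fin 4) (Fin 4) ℂ :=
  Matrix.of fun r c =>
    ρ α₀ β₀ t ⟨2 * (r.val / 2) + c.val % 2, by omega⟩
      ⟨2 * (c.val / 2) + r.val % 2, by omega⟩

lemma det_fin_four' {R : Type*} [CommRing R] (A : Matrix (Fin 4) (Fin 4) R) :
    det A =
      A 0 0 * (A 1 1 * A 2 2 * A 3 3 - A 1 1 * A 2 3 * A 3 2 - A 1 2 * A 2 1 * A 3 3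
        + A 1 2 * A 2 3 * A 3 1 + A 1 3 * A 2 1 * A 3 2 - A 1 3 * A 2 2 * A 3 1)
      - A 0 1 * (A 1 0 * A 2 2 * A 3 3 - A 1 0 * A 2 3 * A 3 2 - A 1 2 * A 2 0 * A 3 3
        + A 1 2 * A 2 3 * A 3 0 + A 1 3 * A 2 0 * A 3 2 - A 1 3 * A 2 2 * A 3 0)
      + A 0 2 * (A 1 0 * A 2 1 * A 3 3 - A 1 0 * A 2 3 * A 3 1 - A 1 1 * A 2 0 * A 3 3
        + A 1 1 * A 2 3 * A 3 0 + A 1 3 * A 2 0 * A 3 1 - A 1 3 * A 2 1 * A 3 0)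
      - A 0 3 * (A 1 0 * A 2 1 * A 3 2 - A 1 0 * A 2 2 * A 3 1 - A 1 1 * A 2 0 * A 3 2
        + A 1 1 * A 2 2 * A 3 0 + A 1 2 * A 2 0 * A 3 1 - A 1 2 * A 2 1 * A 3 0) := by
  rw [Matrix.det_succ_row_zero]
  simp [Fin.sum_univ_succ, Matrix.det_fin_three, Fin.succAbove,
    show Fin.succ (2 : Fin 3) = (3 : Fin 4) from rfl, show Fin.castSucc (2 : Fin 3) = (2 : Fin 4) from rfl]
  ring

theorem key (α₀ β₀ : ℂ) (t : ℝ)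
    (hnorm : ‖α₀‖ ^ 2 + ‖β₀‖ ^ 2 = 1) :
    (ρTB α₀ β₀ t).charpoly =
        (X ^ 2 - X + C ((‖β₀‖ ^ 4 * Real.sin (2 * t) ^ 2 / 4 : ℝ) : ℂ)) *
        (X ^ 2 - C ((‖β₀‖ ^ 4 * Real.sin (2 * t) ^ 2 / 4 : ℝ) : ℂ)) := by
  have h1 : α₀ * (starRingEnd ℂ) α₀ + β₀ * (starRingEnd ℂ) β₀ = 1 := by
    rw [Complex.mul_conj, Complex.mul_conj]
    rw [← Complex.sq_norm, ← Complex.sq_norm]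
    exact_mod_cast congrArg (Complex.ofReal ·) hnorm
  have hsc : ((Real.sin t : ℂ))^2 + ((Real.cos t : ℂ))^2 = 1 := by
    exact_mod_cast congrArg (Complex.ofReal ·) (Real.sin_sq_add_cos_sq t)
  have hq : ((‖β₀‖ ^ 4 * Real.sin (2 * t) ^ 2 / 4 : ℝ) : ℂ)
      = (β₀ * (starRingEnd ℂ) β₀)^2 * (Real.sin t : ℂ)^2 * (Real.cos t : ℂ)^2 := by
    rw [Complex.mul_conj, ← Complex.sq_norm]
    push_cast [Real.sin_two_mul]
    ring
  apply Polynomial.funext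
  intro z
  rw [Matrix.charpoly]
  have hdet := RingHom.map_det (Polynomial.evalRingHom z) (charmatrix (ρTB α₀ β₀ t))
  simp only [RingHom.mapMatrix_apply, coe_evalRingHom] at hdet
  rw [hdet]
  have hmat : (charmatrix (ρTB α₀ β₀ t)).map (eval z) =
    !![z - α₀ * star α₀, -((-Complex.I * (Real.sin t:ℂ) * β₀) * star α₀),
        -(α₀ * star ((Real.cos t:ℂ)*β₀)), -((-Complex.I * (Real.sin t:ℂ) * β₀) * star ((Real.cos t:ℂ)*β₀));
       -(α₀ * star (-Complex.I * (Real.sin t:ℂ) * β₀)), z - (-Complex.I * (Real.sin t:ℂ) * β₀) * star (-Complex.I * (Real.sin t:ℂ) * β₀), 0, 0;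
       -(((Real.cos t:ℂ)*β₀) * star α₀), 0, z - ((Real.cos t:ℂ)*β₀) * star ((Real.cos t:ℂ)*β₀), 0;
       -(((Real.cos t:ℂ)*β₀) * star (-Complex.I * (Real.sin t:ℂ) * β₀)), 0, 0, z] := by
    ext i j
    fin_cases i <;> fin_cases j <;>
      simp [charmatrix_apply, ρTB, ρ, ψ, vecMulVec_apply, Matrix.vecHead, Matrix.vecTail,
        Matrix.one_apply, show ((3 : Fin 4) : ℕ) = 3 from rfl, Fin.ext_iff]
  rw [hmat, det_fin_four']
  have hI4 : Complex.I ^ 4 = 1 := by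
    norm_num [show (4:ℕ) = 2*2 from rfl, pow_mul, Complex.I_sq]
  simp [hq, star_mul', Complex.star_def, Complex.conj_ofReal, Complex.I_sq, hI4,
    Matrix.vecHead, Matrix.vecTail, -Complex.ofReal_sin, -Complex.ofReal_cos]
  ring_nf
  simp only [Complex.I_sq, hI4]
  set s : ℂ := (Real.sin t : ℂ)
  set c : ℂ := (Real.cos t : ℂ)
  set a : ℂ := α₀ * (starRingEnd ℂ) α₀ with ha
  set b : ℂ := β₀ * (starRingEnd ℂ) β₀ with hb
  linear_combination (b^2 * s^2 * c^2 * z - z^3) * h1 + (-a*b*z^2 + z*s^2*c^2*b^3 + z^2*a*b - z^3*b) * hsc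

/-- The characteristic polynomial of the partial transpose of ρ(t) is
(X² − X + |β₀|⁴sin²(2t)/4)(X² − |β₀|⁴sin²(2t)/4); hence its eigenvalues are
±|β₀|² sin(t)cos(t) together with (1 ± √(1 − |β₀|⁴ sin²(2t)))/2. -/
theorem ppt_of_switch_state (α₀ β₀ : ℂ) (t : ℝ)
    (hnorm : ‖α₀‖ ^ 2 + ‖β₀‖ ^ 2 = 1) :
    (ρTB α₀ β₀ t).charpoly =
        (X ^ 2 - X + C ((‖β₀‖ ^ 4 * Real.sin (2 * t) ^ 2 / 4 : ℝ) : ℂ)) *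
        (X ^ 2 - C ((‖β₀‖ ^ 4 * Real.sin (2 * t) ^ 2 / 4 : ℝ) : ℂ)) ∧
    (ρTB α₀ β₀ t).charpoly.eval
        (((‖β₀‖ ^ 2 * Real.sin t * Real.cos t : ℝ)) : ℂ) = 0 ∧
    (ρTB α₀ β₀ t).charpoly.eval
        (((-(‖β₀‖ ^ 2 * Real.sin t * Real.cos t) : ℝ)) : ℂ) = 0 ∧
    (ρTB α₀ β₀ t).charpoly.eval
        ((((1 + Real.sqrt (1 - ‖β₀‖ ^ 4 * Real.sin (2 * t) ^ 2)) / 2 : ℝ)) : ℂ)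
      = 0 ∧
    (ρTB α₀ β₀ t).charpoly.eval
        ((((1 - Real.sqrt (1 - ‖β₀‖ ^ 4 * Real.sin (2 * t) ^ 2)) / 2 : ℝ)) : ℂ)
      = 0 := by
  have hP := key α₀ β₀ t hnorm
  set q : ℝ := ‖β₀‖ ^ 4 * Real.sin (2 * t) ^ 2 / 4 with hqdef
  have habs : ‖β₀‖ ^ 2 ≤ 1 := by nlinarith [sq_nonneg (‖α₀‖)]
  have hsin : Real.sin (2 * t) ^ 2 ≤ 1 := Real.sin_sq_le_one (2 * t)
  have hD : (0:ℝ) ≤ 1 - ‖β₀‖ ^ 4 * Real.sin (2 * t) ^ 2 := by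
    nlinarith [sq_nonneg (Real.sin (2 * t)), sq_nonneg (‖β₀‖),
      sq_nonneg (‖β₀‖ ^ 2)]
  have hr : Real.sqrt (1 - ‖β₀‖ ^ 4 * Real.sin (2 * t) ^ 2) ^ 2
      = 1 - 4 * q := by rw [Real.sq_sqrt hD]; ring
  refine ⟨hP, ?_, ?_, ?_, ?_⟩ <;> rw [hP] <;>
    simp only [eval_mul, eval_add, eval_sub, eval_pow, eval_X, eval_C]
  · apply mul_eq_zero_of_right
    rw [← Complex.ofReal_pow, ← Complex.ofReal_sub, Complex.ofReal_eq_zero]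
    rw [hqdef, Real.sin_two_mul]; ring
  · apply mul_eq_zero_of_right
    rw [← Complex.ofReal_pow, ← Complex.ofReal_sub, Complex.ofReal_eq_zero]
    rw [hqdef, Real.sin_two_mul]; ring
  · apply mul_eq_zero_of_left
    rw [← Complex.ofReal_pow, ← Complex.ofReal_sub, ← Complex.ofReal_add,
      Complex.ofReal_eq_zero]
    linear_combination hr / 4
  · apply mul_eq_zero_of_left
    rw [← Complex.ofReal_pow, ← Complex.ofReal_sub, ← Complex.ofReal_add,
      Complex.ofReal_eq_zero]
    linear_combination hr / 4
end

section
/- Let α₀, β₀ ∈ ℂ with |α₀|² + |β₀|² = 1, t ∈ ℝ, and let ρ_A(t) be the 2×2 reduced density matrix of ψ(t) obtained by tracing out the second qubit. Then ρ_A(t) = [[|α₀|² + sin²(t)|β₀|², α₀·conj(cos(t)β₀)], [conj(α₀)·cos(t)β₀, cos²(t)|β₀|²]], its characteristic polynomial equals X² − X + |β₀|⁴ sin²(2t)/4, and its eigenvalues are (1 ± √(2|α₀β₀|² + |α₀|⁴ + |β₀|⁴ cos²(2t)))/2, which under the normalization |α₀|² + |β₀|² = 1 equal (1 ± √(1 −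 |β₀|⁴ sin²(2t)))/2. -/
open Matrix Polynomial Complex

/-- The reduced density matrix on the first qubit (partial trace over the second):
`(ρ_A)_{i,j} = Σ_k ρ_{2i+k, 2j+k}`. -/
noncomputable def ρA (α₀ β₀ : ℂ) (t : ℝ) : Matrix (Fin 2) (Fin 2) ℂ :=
  Matrix.of fun i j => ∑ k : Fin 2,
    ρ α₀ β₀ t ⟨2 * i.val + k.val, by omega⟩ ⟨2 * j.val + k.val, by omega⟩

lemma charpoly_fin2' (a b c d : ℂ) :
    (!![a,b;c,d]).charpoly = X^2 - C (a+d) * X + C (a*d - b*c) := by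
  rw [Matrix.charpoly, Matrix.det_fin_two]
  simp [charmatrix_apply]
  ring

lemma ρA_eq (α₀ β₀ : ℂ) (t : ℝ) :
    ρA α₀ β₀ t =
      !![((‖α₀‖ ^ 2 + Real.sin t ^ 2 * ‖β₀‖ ^ 2 : ℝ) : ℂ),
          α₀ * (starRingEnd ℂ) ((Real.cos t : ℂ) * β₀);
        (starRingEnd ℂ) α₀ * ((Real.cos t : ℂ) * β₀),
          ((Real.cos t ^ 2 * ‖β₀‖ ^ 2 : ℝ) : ℂ)] := by
  ext i j
  fin_cases i <;> fin_cases j <;>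
    simp only [ρA, ρ, ψ, vecMulVec_apply, of_apply, Fin.sum_univ_two, Fin.zero_eta, Fin.mk_one,
      Pi.star_apply] <;>
    norm_num <;>
    simp [Complex.ext_iff, Complex.mul_re, Complex.mul_im, ← Complex.ofReal_sin,
      ← Complex.ofReal_cos, Complex.sq_norm, Complex.normSq_apply, ← Complex.ofReal_pow] <;>
    constructor <;> ring

lemma charpoly_ρA (α₀ β₀ : ℂ) (t : ℝ)
    (hnorm : ‖α₀‖ ^ 2 + ‖β₀‖ ^ 2 = 1) :
    (ρA α₀ β₀ t).charpoly =
        X ^ 2 - X + C ((‖β₀‖ ^ 4 * Real.sin (2 * t) ^ 2 / 4 : ℝ) : ℂ) := by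
  rw [ρA_eq, charpoly_fin2']
  have hsc : Real.sin t ^ 2 + Real.cos t ^ 2 = 1 := Real.sin_sq_add_cos_sq t
  have htr : (((‖α₀‖ ^ 2 + Real.sin t ^ 2 * ‖β₀‖ ^ 2 : ℝ) : ℂ)
      + ((Real.cos t ^ 2 * ‖β₀‖ ^ 2 : ℝ) : ℂ)) = 1 := by
    push_cast
    have h1 : ((‖α₀‖ ^ 2 + ‖β₀‖ ^ 2 : ℝ) : ℂ) = 1 := by rw [hnorm]; norm_num
    have h2 : ((Real.sin t ^ 2 + Real.cos t ^ 2 : ℝ) : ℂ) = 1 := by rw [hsc]; norm_num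
    push_cast at h1 h2
    linear_combination h1 + ((‖β₀‖ : ℂ))^2 * h2
  have hdet : (((‖α₀‖ ^ 2 + Real.sin t ^ 2 * ‖β₀‖ ^ 2 : ℝ) : ℂ)
        * ((Real.cos t ^ 2 * ‖β₀‖ ^ 2 : ℝ) : ℂ)
      - (α₀ * (starRingEnd ℂ) ((Real.cos t : ℂ) * β₀))
        * ((starRingEnd ℂ) α₀ * ((Real.cos t : ℂ) * β₀)))
      = ((‖β₀‖ ^ 4 * Real.sin (2 * t) ^ 2 / 4 : ℝ) : ℂ) := by
    have hab : α₀ * ((starRingEnd ℂ) α₀) = ((‖α₀‖ : ℝ) : ℂ)^2 := by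
      rw [Complex.mul_conj, Complex.normSq_eq_norm_sq]; push_cast; ring
    have hbb : β₀ * ((starRingEnd ℂ) β₀) = ((‖β₀‖ : ℝ) : ℂ)^2 := by
      rw [Complex.mul_conj, Complex.normSq_eq_norm_sq]; push_cast; ring
    have hs2 : ((Real.sin (2*t) : ℝ) : ℂ) = 2 * (Real.sin t : ℂ) * (Real.cos t : ℂ) := by
      rw [Real.sin_two_mul]; push_cast; ring
    simp only [_root_.map_mul, Complex.conj_ofReal]
    push_cast at hs2 ⊢
    rw [hs2]
    linear_combination (-(Complex.cos (t:ℂ))^2 * (β₀ * ((starRingEnd ℂ) β₀)) * hab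
      - (Complex.cos (t:ℂ))^2 * ((‖α₀‖ : ℂ))^2 * hbb)
  rw [htr, hdet]
  simp

/-- Explicit form, characteristic polynomial and eigenvalues of the reduced density
matrix ρ_A(t) of the switch state. -/
theorem reduced_density_matrix_of_switch_state (α₀ β₀ : ℂ) (t : ℝ)
    (hnorm : ‖α₀‖ ^ 2 + ‖β₀‖ ^ 2 = 1) :
    ρA α₀ β₀ t =
      !![((‖α₀‖ ^ 2 + Real.sin t ^ 2 * ‖β₀‖ ^ 2 : ℝ) : ℂ),
          α₀ * (starRingEnd ℂ) ((Real.cos t : ℂ) * β₀);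
        (starRingEnd ℂ) α₀ * ((Real.cos t : ℂ) * β₀),
          ((Real.cos t ^ 2 * ‖β₀‖ ^ 2 : ℝ) : ℂ)] ∧
    (ρA α₀ β₀ t).charpoly =
        X ^ 2 - X + C ((‖β₀‖ ^ 4 * Real.sin (2 * t) ^ 2 / 4 : ℝ) : ℂ) ∧
    (ρA α₀ β₀ t).charpoly.eval
        ((((1 + Real.sqrt (2 * ‖α₀ * β₀‖ ^ 2 + ‖α₀‖ ^ 4 +
            ‖β₀‖ ^ 4 * Real.cos (2 * t) ^ 2)) / 2 : ℝ)) : ℂ) = 0 ∧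
    (ρA α₀ β₀ t).charpoly.eval
        ((((1 - Real.sqrt (2 * ‖α₀ * β₀‖ ^ 2 + ‖α₀‖ ^ 4 +
            ‖β₀‖ ^ 4 * Real.cos (2 * t) ^ 2)) / 2 : ℝ)) : ℂ) = 0 ∧
    ((1 + Real.sqrt (2 * ‖α₀ * β₀‖ ^ 2 + ‖α₀‖ ^ 4 +
        ‖β₀‖ ^ 4 * Real.cos (2 * t) ^ 2)) / 2
      = (1 + Real.sqrt (1 - ‖β₀‖ ^ 4 * Real.sin (2 * t) ^ 2)) / 2) ∧
    ((1 - Real.sqrt (2 * ‖α₀ * β₀‖ ^ 2 + ‖α₀‖ ^ 4 +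
        ‖β₀‖ ^ 4 * Real.cos (2 * t) ^ 2)) / 2
      = (1 - Real.sqrt (1 - ‖β₀‖ ^ 4 * Real.sin (2 * t) ^ 2)) / 2) := by
  set A : ℝ := 2 * ‖α₀ * β₀‖ ^ 2 + ‖α₀‖ ^ 4 +
      ‖β₀‖ ^ 4 * Real.cos (2 * t) ^ 2 with hAdef
  have hA0 : 0 ≤ A := by positivity
  have hA : A = 1 - ‖β₀‖ ^ 4 * Real.sin (2 * t) ^ 2 := by
    rw [hAdef, norm_mul]
    linear_combination (‖α₀‖ ^ 2 + ‖β₀‖ ^ 2 + 1) * hnorm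
      + ‖β₀‖ ^ 4 * Real.sin_sq_add_cos_sq (2 * t)
  have hr : Real.sqrt A ^ 2 = A := Real.sq_sqrt hA0
  have hcp := charpoly_ρA α₀ β₀ t hnorm
  have heval : ∀ L : ℝ, L ^ 2 - L + ‖β₀‖ ^ 4 * Real.sin (2 * t) ^ 2 / 4 = 0 →
      (ρA α₀ β₀ t).charpoly.eval ((L : ℝ) : ℂ) = 0 := by
    intro L hL
    rw [hcp]
    simp only [eval_add, eval_sub, eval_pow, eval_X, eval_C]
    exact_mod_cast congrArg (fun x : ℝ => (x : ℂ)) hL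
  refine ⟨ρA_eq α₀ β₀ t, hcp, heval _ ?_, heval _ ?_, by rw [hA], by rw [hA]⟩
  · linear_combination hr / 4 + hA / 4
  · linear_combination hr / 4 + hA / 4
end

section
/- Let α₀, β₀ ∈ ℂ with |α₀|² + |β₀|² = 1, t ∈ ℝ, and let ρ_A(t) be the 2×2 reduced density matrix of ψ(t) obtained by tracing out the second qubit. Then tr(ρ_A(t)²) = 1 − |β₀|⁴ sin²(2t)/2; consequently the I-Concurrence of ψ(t), defined as √(2(1 − tr(ρ_A(t)²))), equals |β₀|²·|sin(2t)|, and it coincides with the pure-state concurrence 2·|ψ(t)₀·ψ(t)₃ − ψ(t)₁·ψ(t)₂|. -/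
open Matrix Complex

/-- Purity and I-Concurrence of the switch state: tr(ρ_A²) = 1 − |β₀|⁴ sin²(2t)/2,
so the I-Concurrence √(2(1 − tr(ρ_A²))) equals |β₀|²·|sin(2t)|, which coincides with
the pure-state concurrence 2|ψ₀ψ₃ − ψ₁ψ₂|. -/
theorem iconcurrence_of_switch_state (α₀ β₀ : ℂ) (t : ℝ)
    (hnorm : ‖α₀‖ ^ 2 + ‖β₀‖ ^ 2 = 1) :
    (ρA α₀ β₀ t * ρA α₀ β₀ t).trace =
        ((1 - ‖β₀‖ ^ 4 * Real.sin (2 * t) ^ 2 / 2 : ℝ) : ℂ) ∧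
    Real.sqrt (2 * (1 - ((ρA α₀ β₀ t * ρA α₀ β₀ t).trace).re)) =
        ‖β₀‖ ^ 2 * |Real.sin (2 * t)| ∧
    Real.sqrt (2 * (1 - ((ρA α₀ β₀ t * ρA α₀ β₀ t).trace).re)) =
        2 * ‖ψ α₀ β₀ t 0 * ψ α₀ β₀ t 3 - ψ α₀ β₀ t 1 * ψ α₀ β₀ t 2‖ := by

  have h1 : α₀ * (starRingEnd ℂ) α₀ + β₀ * (starRingEnd ℂ) β₀ = 1 := by
    rw [Complex.mul_conj, Complex.mul_conj]
    norm_cast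
    rw [← Complex.sq_norm, ← Complex.sq_norm]; exact_mod_cast hnorm
  have h2 : ((Real.cos t : ℂ))^2 + ((Real.sin t : ℂ))^2 = 1 := by
    norm_cast; exact_mod_cast Real.cos_sq_add_sin_sq t
  have hb : ((‖β₀‖ ^ 2 : ℝ) : ℂ) = β₀ * (starRingEnd ℂ) β₀ := by
    rw [Complex.mul_conj]; norm_cast; rw [← Complex.sq_norm]
  have htr : (ρA α₀ β₀ t * ρA α₀ β₀ t).trace =
      ((1 - ‖β₀‖ ^ 4 * Real.sin (2 * t) ^ 2 / 2 : ℝ) : ℂ) := by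
    simp only [Matrix.trace, Matrix.diag, Matrix.mul_apply, ρA, ρ, ψ, vecMulVec_apply,
      Matrix.of_apply, Fin.sum_univ_two, Pi.star_apply, Fin.isValue]
    norm_num [Real.sin_two_mul, Complex.conj_ofReal]
    simp only [← Complex.ofReal_sin, ← Complex.ofReal_cos, Complex.conj_ofReal]
    rw [show ((‖β₀‖ :ℝ):ℂ)^4 = (((‖β₀‖ ^2:ℝ):ℂ))^2 by norm_cast; ring, hb]
    set a := α₀ * (starRingEnd ℂ) α₀ with ha
    set b := β₀ * (starRingEnd ℂ) β₀ with hbb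
    linear_combination (a + b*(((Real.cos t:ℂ))^2+((Real.sin t:ℂ))^2) + 1) * h1 +
      b * (a + b*(((Real.cos t:ℂ))^2+((Real.sin t:ℂ))^2) + 1) * h2 +
      (-2*a*b*((Real.sin t:ℂ))^2 + (Complex.I^2 - 1)*((Real.sin t:ℂ))^4*b^2) * Complex.I_sq
  have hre : ((ρA α₀ β₀ t * ρA α₀ β₀ t).trace).re
      = 1 - ‖β₀‖ ^ 4 * Real.sin (2 * t) ^ 2 / 2 := by
    rw [htr, Complex.ofReal_re]
  have hsqrt : Real.sqrt (2 * (1 - ((ρA α₀ β₀ t * ρA α₀ β₀ t).trace).re)) =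
      ‖β₀‖ ^ 2 * |Real.sin (2 * t)| := by
    rw [hre]
    have : 2 * (1 - (1 - ‖β₀‖ ^ 4 * Real.sin (2 * t) ^ 2 / 2))
        = (‖β₀‖ ^ 2 * |Real.sin (2 * t)|) ^ 2 := by
      rw [mul_pow, _root_.sq_abs (Real.sin (2*t))]; ring
    rw [this, Real.sqrt_sq (by positivity)]
  refine ⟨htr, hsqrt, ?_⟩
  rw [hsqrt]
  simp only [ψ, Matrix.cons_val_zero, Matrix.cons_val_one, Matrix.head_cons,
    Matrix.cons_val_fin_one, Matrix.cons_val]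
  norm_num [show ((3:Fin 4)) = (3:Fin 4) from rfl]
  simp only [← Complex.ofReal_sin, ← Complex.ofReal_cos, Complex.norm_real, Real.norm_eq_abs]
  rw [Real.sin_two_mul, abs_mul, abs_mul, _root_.abs_two]
  ring
end
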